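/- arXiv:1312.2730 — 2 statements merged into one kernel-verified Lean document; each statement's English description precedes it below -/
import Mathlib

section
/- Let k ≥ 1 and let c > 0 with ck < 1/2, and let 𝒞 be a class of finite simple graphs, closed under induced subgraphs, that is ck-good. Let T0 be a trigraph in closure(𝒞^{≤k}) containing at least one strongly adjacent pair or at least one strongly antiadjacent pair, and let w0 : V(T0) → ℕ be c-balanced. Then T0 admits a biclique or a complement biclique (V1, V2) with min(w0(V1), w0(V2)) ≥ c·w0(V(T0)). -/
/-- A trigraph on a finite vertex set `verts` drawn from an ambient type `α`:
a symmetric adjacency function with values in {-1, 0, 1}. (Graphs are the trigraphs with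
no value 0 between distinct vertices of `verts`.) -/
structure FTG (α : Type) where
  verts : Finset α
  theta : α → α → ℤ
  symm : ∀ u v, theta u v = theta v u
  range : ∀ u v, theta u v = -1 ∨ theta u v = 0 ∨ theta u v = 1

namespace FTG

variable {α : Type} [DecidableEq α]

def StrongAdj (T : FTG α) (u v : α) : Prop :=
  u ∈ T.verts ∧ v ∈ T.verts ∧ u ≠ v ∧ T.theta u v = 1

def StrongAntiAdj (T : FTG α) (u v : α) : Prop :=
  u ∈ T.verts ∧ v ∈ T.verts ∧ u ≠ v ∧ T.theta u v = -1

def Switchable (T : FTG α) (u v : α) : Prop :=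
  u ∈ T.verts ∧ v ∈ T.verts ∧ u ≠ v ∧ T.theta u v = 0

def Adj (T : FTG α) (u v : α) : Prop :=
  u ∈ T.verts ∧ v ∈ T.verts ∧ u ≠ v ∧ 0 ≤ T.theta u v

def AntiAdj (T : FTG α) (u v : α) : Prop :=
  u ∈ T.verts ∧ v ∈ T.verts ∧ u ≠ v ∧ T.theta u v ≤ 0

/-- `T` is a (simple) graph: no switchable pair. -/
def IsGraph (T : FTG α) : Prop :=
  ∀ u v, u ∈ T.verts → v ∈ T.verts → u ≠ v → T.theta u v ≠ 0

/-- `G` is a realization of `T`: a graph on the same vertex set keeping all strong edges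
and strong antiedges. -/
def IsRealization (T G : FTG α) : Prop :=
  G.verts = T.verts ∧ G.IsGraph ∧
  ∀ u v, u ∈ T.verts → v ∈ T.verts → u ≠ v →
    (T.theta u v = 1 → G.theta u v = 1) ∧ (T.theta u v = -1 → G.theta u v = -1)

def IsClique (T : FTG α) (K : Set α) : Prop := K ⊆ ↑T.verts ∧ K.Pairwise T.Adj

def IsStable (T : FTG α) (S : Set α) : Prop := S ⊆ ↑T.verts ∧ S.Pairwise T.AntiAdj

def IsCut (T : FTG α) (c : Set α × Set α) : Prop :=
  Disjoint c.1 c.2 ∧ c.1 ∪ c.2 = ↑T.verts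

def IsCSSeparator (T : FTG α) (F : Finset (Set α × Set α)) : Prop :=
  (∀ c ∈ F, T.IsCut c) ∧
  ∀ K S : Set α, T.IsClique K → T.IsStable S → Disjoint K S →
    ∃ c ∈ F, K ⊆ c.1 ∧ S ⊆ c.2

/-- Membership in the class `𝒞^{≤k}`: the vertex set has a partition into parts of size
at most `k`, all pairs inside a part are switchable, no switchable pair crosses two parts,
and some realization belongs to `𝒞`. -/
def InCk (C : Set (FTG α)) (k : ℕ) (T : FTG α) : Prop :=
  (∃ P : Finset (Finset α),
    P.biUnion id = T.verts ∧
    (∀ p ∈ P, ∀ q ∈ P, p ≠ q → Disjoint p q) ∧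
    (∀ p ∈ P, 1 ≤ p.card ∧ p.card ≤ k) ∧
    (∀ p ∈ P, ∀ u ∈ p, ∀ v ∈ p, u ≠ v → T.theta u v = 0) ∧
    (∀ u v, u ∈ T.verts → v ∈ T.verts → u ≠ v → T.theta u v = 0 →
      ∀ p ∈ P, (u ∈ p ↔ v ∈ p))) ∧
  ∃ G ∈ C, T.IsRealization G

/-- `T` is the generalized `k`-join of `T1` and `T2`. -/
def IsGenJoin (k : ℕ) (T T1 T2 : FTG α) : Prop :=
  ∃ (r s : ℕ) (A : Fin r → Finset α) (B : Fin s → Finset α) (a : Fin r → α) (b : Fin s → α),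
    1 ≤ r ∧ r ≤ k ∧ 1 ≤ s ∧ s ≤ k ∧
    (∀ j, (A j).Nonempty) ∧ (∀ i, (B i).Nonempty) ∧
    (∀ j j', j ≠ j' → Disjoint (A j) (A j')) ∧
    (∀ i i', i ≠ i' → Disjoint (B i) (B i')) ∧
    Function.Injective a ∧ Function.Injective b ∧
    (∀ i j, b i ∉ A j) ∧ (∀ j i, a j ∉ B i) ∧
    Disjoint T1.verts T2.verts ∧
    T1.verts = Finset.univ.biUnion A ∪ Finset.univ.image b ∧
    T2.verts = Finset.univ.biUnion B ∪ Finset.univ.image a ∧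
    (∀ i i', i ≠ i' → T1.theta (b i) (b i') = 0) ∧
    (∀ j j', j ≠ j' → T2.theta (a j) (a j') = 0) ∧
    (∀ i j, ((∀ u ∈ A j, T1.theta (b i) u = 1) ∧ (∀ u ∈ B i, T2.theta (a j) u = 1)) ∨
            ((∀ u ∈ A j, T1.theta (b i) u = -1) ∧ (∀ u ∈ B i, T2.theta (a j) u = -1))) ∧
    T.verts = Finset.univ.biUnion A ∪ Finset.univ.biUnion B ∧
    (∀ u ∈ Finset.univ.biUnion A, ∀ v ∈ Finset.univ.biUnion A, T.theta u v = T1.theta u v) ∧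
    (∀ u ∈ Finset.univ.biUnion B, ∀ v ∈ Finset.univ.biUnion B, T.theta u v = T2.theta u v) ∧
    (∀ j i, ∀ u ∈ A j, ∀ v ∈ B i,
      ((∀ x ∈ A j, T1.theta (b i) x = 1) → T.theta u v = 1) ∧
      ((∀ x ∈ A j, T1.theta (b i) x = -1) → T.theta u v = -1))

/-- The closure of `𝒞^{≤k}` under generalized `k`-joins. -/
inductive InClosure (C : Set (FTG α)) (k : ℕ) : FTG α → Prop where
  | base (T : FTG α) (h : InCk C k T) : InClosure C k T
  | join (T T1 T2 : FTG α) (h1 : InClosure C k T1) (h2 : InClosure C k T2)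
      (h : IsGenJoin k T T1 T2) : InClosure C k T

/-- `𝒞` is closed under induced subgraphs. -/
def ClosedUnderInduced (C : Set (FTG α)) : Prop :=
  ∀ G ∈ C, ∀ s : Finset α, s ⊆ G.verts → FTG.mk s G.theta G.symm G.range ∈ C

/-- `𝒞` is `c`-good: every member with at least 2 vertices, with any `c`-balanced weight
function, has a biclique or a complement biclique of weight at least `c` times the total
weight. -/
def IsGood (c : ℝ) (C : Set (FTG α)) : Prop :=
  ∀ G ∈ C, 2 ≤ G.verts.card → ∀ w : α → ℕ,
    (∀ v ∈ G.verts, (w v : ℝ) ≤ c * ∑ x ∈ G.verts, (w x : ℝ)) →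
    ∃ V1 V2 : Finset α, V1 ⊆ G.verts ∧ V2 ⊆ G.verts ∧ Disjoint V1 V2 ∧
      ((∀ u ∈ V1, ∀ v ∈ V2, G.StrongAdj u v) ∨ (∀ u ∈ V1, ∀ v ∈ V2, G.StrongAntiAdj u v)) ∧
      c * (∑ x ∈ G.verts, (w x : ℝ)) ≤ min (∑ x ∈ V1, (w x : ℝ)) (∑ x ∈ V2, (w x : ℝ))

end FTG

/-- if 𝒞 is a ck-good hereditary class of graphs (k ≥ 1, 0 < c, ck < 1/2),
then every trigraph T0 of the closure of 𝒞^{≤k} under generalized k-joins containing a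
strongly adjacent or strongly antiadjacent pair, with a c-balanced weight function w0,
has a biclique or a complement biclique of weight at least c·w0(V(T0)). -/
theorem stmt_18 {α : Type} [DecidableEq α] (k : ℕ) (hk : 1 ≤ k) (c : ℝ) (hc : 0 < c)
    (hck : c * k < 1 / 2) (C : Set (FTG α)) (hgraph : ∀ G ∈ C, FTG.IsGraph G)
    (hered : FTG.ClosedUnderInduced C) (hgood : FTG.IsGood (c * k) C)
    (T0 : FTG α) (hT0 : FTG.InClosure C k T0)
    (hedge : ∃ u v, T0.StrongAdj u v ∨ T0.StrongAntiAdj u v)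
    (w0 : α → ℕ) (hw0 : ∀ v ∈ T0.verts, (w0 v : ℝ) ≤ c * ∑ x ∈ T0.verts, (w0 x : ℝ)) :
    ∃ V1 V2 : Finset α, V1 ⊆ T0.verts ∧ V2 ⊆ T0.verts ∧ Disjoint V1 V2 ∧
      ((∀ u ∈ V1, ∀ v ∈ V2, T0.StrongAdj u v) ∨
       (∀ u ∈ V1, ∀ v ∈ V2, T0.StrongAntiAdj u v)) ∧
      c * (∑ x ∈ T0.verts, (w0 x : ℝ)) ≤
        min (∑ x ∈ V1, (w0 x : ℝ)) (∑ x ∈ V2, (w0 x : ℝ)) := by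
  induction hT0 generalizing w0 with
  | base T h =>
    classical
    obtain ⟨⟨P, hPcover, hPdisj, hPcard, hPswitch, hPsep⟩, G, hGC, hGreal⟩ := h
    obtain ⟨hGv, hGgraph, hGtheta⟩ := hGreal
    obtain ⟨u0, v0, hedge0⟩ := hedge
    set W : ℝ := ∑ x ∈ T.verts, (w0 x : ℝ) with hW
    have hWnn : 0 ≤ W := Finset.sum_nonneg fun x _ => by positivity
    have hk0 : (0:ℝ) < (k:ℝ) := by exact_mod_cast hk
    -- uniqueness of parts
    have huniq : ∀ p ∈ P, ∀ q ∈ P, ∀ x, x ∈ p → x ∈ q → p = q := by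
      intro p hp q hq x hxp hxq
      by_contra hne
      exact (Finset.disjoint_left.mp (hPdisj p hp q hq hne)) hxp hxq
    have hPsub : ∀ p ∈ P, ∀ x ∈ p, x ∈ T.verts := by
      intro p hp x hx
      rw [← hPcover]
      exact Finset.mem_biUnion.mpr ⟨p, hp, hx⟩
    -- representatives: max-weight vertex of each part
    have hrepex : ∀ p ∈ P, ∃ m, m ∈ p ∧ ∀ x ∈ p, w0 x ≤ w0 m := by
      intro p hp
      have hne : p.Nonempty := Finset.card_pos.mp (hPcard p hp).1
      obtain ⟨m, hm, hmax⟩ := Finset.exists_max_image p w0 hne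
      exact ⟨m, hm, hmax⟩
    set rep : Finset α → α :=
      fun p => if h : ∃ m, m ∈ p ∧ ∀ x ∈ p, w0 x ≤ w0 m then h.choose else u0 with hrepdef
    have hrep_mem : ∀ p ∈ P, rep p ∈ p := by
      intro p hp
      have h := hrepex p hp
      simp only [hrepdef, dif_pos h]
      exact h.choose_spec.1
    have hrep_max : ∀ p ∈ P, ∀ x ∈ p, w0 x ≤ w0 (rep p) := by
      intro p hp x hx
      have h := hrepex p hp
      simp only [hrepdef, dif_pos h]
      exact h.choose_spec.2 x hx
    have hrep_inj : ∀ p ∈ P, ∀ q ∈ P, rep p = rep q → p = q := by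
      intro p hp q hq he
      exact huniq p hp q hq (rep p) (hrep_mem p hp) (he ▸ hrep_mem q hq)
    set R : Finset α := P.image rep with hRdef
    have hsubR : R ⊆ T.verts := by
      intro x hx
      obtain ⟨p, hp, hrp⟩ := Finset.mem_image.mp hx
      exact hPsub p hp x (hrp ▸ hrep_mem p hp)
    have hfilter : ∀ q ∈ P, P.filter (fun p => rep q ∈ p) = {q} := by
      intro q hq
      ext r
      simp only [Finset.mem_filter, Finset.mem_singleton]
      constructor
      · rintro ⟨hr, hmem⟩
        exact huniq r hr q hq (rep q) hmem (hrep_mem q hq)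
      · rintro rfl
        exact ⟨hq, hrep_mem _ hq⟩
    set w' : α → ℕ := fun v => ∑ p ∈ P.filter (fun p => v ∈ p), ∑ x ∈ p, w0 x with hw'def
    have hw'rep : ∀ q ∈ P, w' (rep q) = ∑ x ∈ q, w0 x := by
      intro q hq
      simp only [hw'def]
      rw [hfilter q hq, Finset.sum_singleton]
    have hbiu : ∑ x ∈ P.biUnion id, w0 x = ∑ q ∈ P, ∑ x ∈ q, w0 x :=
      Finset.sum_biUnion (fun p hp q hq hne => hPdisj p (Finset.mem_coe.mp hp) q
        (Finset.mem_coe.mp hq) hne)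
    have hsumR : ∑ v ∈ R, w' v = ∑ x ∈ T.verts, w0 x := by
      rw [hRdef, Finset.sum_image (fun p hp q hq => hrep_inj p hp q hq), ← hPcover, hbiu]
      exact Finset.sum_congr rfl fun q hq => hw'rep q hq
    have hsumRR : ∑ v ∈ R, (w' v : ℝ) = W := by
      rw [hW, ← Nat.cast_sum, ← Nat.cast_sum, hsumR]
    -- two parts
    have hstr0 : u0 ∈ T.verts ∧ v0 ∈ T.verts ∧ u0 ≠ v0 ∧ T.theta u0 v0 ≠ 0 := by
      rcases hedge0 with ⟨h1, h2, h3, h4⟩ | ⟨h1, h2, h3, h4⟩ <;>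
        exact ⟨h1, h2, h3, by rw [h4]; norm_num⟩
    obtain ⟨hu0T, hv0T, hne0, hθ0⟩ := hstr0
    obtain ⟨pu, hpu, hu0p⟩ := Finset.mem_biUnion.mp (by rw [hPcover]; exact hu0T)
    obtain ⟨pv, hpv, hv0p⟩ := Finset.mem_biUnion.mp (by rw [hPcover]; exact hv0T)
    have hpuv : pu ≠ pv := by
      rintro rfl
      exact hθ0 (hPswitch pu hpu u0 hu0p v0 hv0p hne0)
    have hcard2 : 2 ≤ R.card := by
      refine Finset.one_lt_card.mpr ⟨rep pu, Finset.mem_image_of_mem rep hpu,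
        rep pv, Finset.mem_image_of_mem rep hpv, fun he => hpuv (hrep_inj pu hpu pv hpv he)⟩
    -- the induced transversal graph
    set G' : FTG α := FTG.mk R G.theta G.symm G.range with hG'def
    have hG'C : G' ∈ C := hered G hGC R (by rw [hGv]; exact hsubR)
    have hbal : ∀ v ∈ G'.verts, (w' v : ℝ) ≤ (c * k) * ∑ x ∈ G'.verts, (w' x : ℝ) := by
      intro v hv
      have hvR : v ∈ R := hv
      obtain ⟨q, hq, hrq⟩ := Finset.mem_image.mp hvR
      have h1 : (w' v : ℝ) = ∑ x ∈ q, (w0 x : ℝ) := by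
        rw [← hrq, hw'rep q hq]; push_cast; ring
      have h2 : ∑ x ∈ q, (w0 x : ℝ) ≤ q.card • (c * W) :=
        Finset.sum_le_card_nsmul q _ _ (fun x hx => hw0 x (hPsub q hq x hx))
      have h3 : (q.card : ℝ) * (c * W) ≤ (k : ℝ) * (c * W) := by
        apply mul_le_mul_of_nonneg_right _ (by positivity)
        exact_mod_cast (hPcard q hq).2
      have hsum' : ∑ x ∈ G'.verts, (w' x : ℝ) = W := hsumRR
      rw [hsum', h1]
      calc ∑ x ∈ q, (w0 x : ℝ) ≤ q.card • (c * W) := h2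
        _ = (q.card : ℝ) * (c * W) := by simp [nsmul_eq_mul]
        _ ≤ (k : ℝ) * (c * W) := h3
        _ = c * k * W := by ring
    obtain ⟨V1, V2, hV1R, hV2R, hdisjV, hstrong, hwt⟩ := hgood G' hG'C hcard2 w' hbal
    have hsum' : ∑ x ∈ G'.verts, (w' x : ℝ) = W := hsumRR
    rw [hsum'] at hwt
    -- adjacency transfer
    have hθne : ∀ u ∈ R, ∀ v ∈ R, u ≠ v → T.theta u v ≠ 0 := by
      intro u hu v hv hne h0
      obtain ⟨p, hp, hrp⟩ := Finset.mem_image.mp hu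
      obtain ⟨q, hq, hrq⟩ := Finset.mem_image.mp hv
      have hpq : p ≠ q := fun he => hne (by rw [← hrp, ← hrq, he])
      have hiff := hPsep u v (hsubR hu) (hsubR hv) hne h0 p hp
      have hvq : v ∈ q := hrq ▸ hrep_mem q hq
      have hvp : v ∈ p := hiff.mp (hrp ▸ hrep_mem p hp)
      exact hpq (huniq p hp q hq v hvp hvq)
    have hadj : ∀ u v, G'.StrongAdj u v → T.StrongAdj u v := by
      rintro u v ⟨hu, hv, hne, hθ⟩
      have huR : u ∈ R := hu
      have hvR : v ∈ R := hv
      refine ⟨hsubR huR, hsubR hvR, hne, ?_⟩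
      rcases T.range u v with h | h | h
      · exact absurd ((hGtheta u v (hsubR huR) (hsubR hvR) hne).2 h) (by rw [hθ]; norm_num)
      · exact absurd h (hθne u huR v hvR hne)
      · exact h
    have hanti : ∀ u v, G'.StrongAntiAdj u v → T.StrongAntiAdj u v := by
      rintro u v ⟨hu, hv, hne, hθ⟩
      have huR : u ∈ R := hu
      have hvR : v ∈ R := hv
      refine ⟨hsubR huR, hsubR hvR, hne, ?_⟩
      rcases T.range u v with h | h | h
      · exact h
      · exact absurd h (hθne u huR v hvR hne)
      · exact absurd ((hGtheta u v (hsubR huR) (hsubR hvR) hne).1 h) (by rw [hθ]; norm_num)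
    -- weight transfer
    have hkey : ∀ V : Finset α, V ⊆ R → (∑ x ∈ V, (w' x : ℝ)) ≤ k * ∑ x ∈ V, (w0 x : ℝ) := by
      intro V hVR
      rw [Finset.mul_sum]
      apply Finset.sum_le_sum
      intro x hx
      obtain ⟨q, hq, hrq⟩ := Finset.mem_image.mp (hVR hx)
      have h1 : w' x = ∑ y ∈ q, w0 y := hrq ▸ hw'rep q hq
      have h2 : ∑ y ∈ q, w0 y ≤ q.card • w0 x :=
        Finset.sum_le_card_nsmul q _ _ (fun y hy => hrq ▸ hrep_max q hq y hy)
      have h3 : q.card • w0 x ≤ k * w0 x := Nat.mul_le_mul_right _ (hPcard q hq).2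
      have : w' x ≤ k * w0 x := by omega
      exact_mod_cast this
    have hfin : ∀ V : Finset α, V ⊆ R → c * k * W ≤ ∑ x ∈ V, (w' x : ℝ) →
        c * W ≤ ∑ x ∈ V, (w0 x : ℝ) := by
      intro V hVR hle
      have h1 := (hkey V hVR)
      have h2 : (k:ℝ) * (c * W) ≤ (k:ℝ) * ∑ x ∈ V, (w0 x : ℝ) := by nlinarith
      exact le_of_mul_le_mul_left h2 hk0
    refine ⟨V1, V2, (fun x hx => hsubR (hV1R hx)), (fun x hx => hsubR (hV2R hx)), hdisjV, ?_, ?_⟩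
    · rcases hstrong with hs | hs
      · exact Or.inl fun u hu v hv => hadj u v (hs u hu v hv)
      · exact Or.inr fun u hu v hv => hanti u v (hs u hu v hv)
    · refine le_min (hfin V1 hV1R (le_trans hwt (min_le_left _ _)))
        (hfin V2 hV2R (le_trans hwt (min_le_right _ _)))

  | join T T1 T2 h1 h2 hj ih1 ih2 =>
    classical
    obtain ⟨r, s, A, B, a, b, hr1, hrk, hs1, hsk, hAne, hBne, hAdisj, hBdisj, hainj, hbinj,
      hbA, haB, hT12, hT1v, hT2v, hbb0, haa0, hdich, hTv, hTA, hTB, hTcross⟩ := hj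
    set UA : Finset α := Finset.univ.biUnion A with hUAdef
    set UB : Finset α := Finset.univ.biUnion B with hUBdef
    set W : ℝ := ∑ x ∈ T.verts, (w0 x : ℝ) with hW
    have hUAsub1 : UA ⊆ T1.verts := by rw [hT1v]; exact Finset.subset_union_left
    have hUBsub2 : UB ⊆ T2.verts := by rw [hT2v]; exact Finset.subset_union_left
    have himb1 : ∀ i, b i ∈ T1.verts := by
      intro i
      rw [hT1v]
      exact Finset.mem_union_right _ (Finset.mem_image.mpr ⟨i, Finset.mem_univ i, rfl⟩)
    have hima2 : ∀ j, a j ∈ T2.verts := by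
      intro j
      rw [hT2v]
      exact Finset.mem_union_right _ (Finset.mem_image.mpr ⟨j, Finset.mem_univ j, rfl⟩)
    have hUAT : UA ⊆ T.verts := by rw [hTv]; exact Finset.subset_union_left
    have hUBT : UB ⊆ T.verts := by rw [hTv]; exact Finset.subset_union_right
    have hdisjAB : Disjoint UA UB := hT12.mono hUAsub1 hUBsub2
    have hmemUA : ∀ u, u ∈ UA ↔ ∃ j, u ∈ A j := by
      intro u
      simp [hUAdef, Finset.mem_biUnion]
    have hmemUB : ∀ u, u ∈ UB ↔ ∃ i, u ∈ B i := by
      intro u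
      simp [hUBdef, Finset.mem_biUnion]
    have hAsubUA : ∀ j, A j ⊆ UA := fun j x hx => (hmemUA x).mpr ⟨j, hx⟩
    have hBsubUB : ∀ i, B i ⊆ UB := fun i x hx => (hmemUB x).mpr ⟨i, hx⟩
    have hbnotUA : ∀ i, b i ∉ UA := by
      intro i hi
      obtain ⟨j, hj⟩ := (hmemUA (b i)).mp hi
      exact hbA i j hj
    have hanotUB : ∀ j, a j ∉ UB := by
      intro j hj
      obtain ⟨i, hi⟩ := (hmemUB (a j)).mp hj
      exact haB j i hi
    have hWsplit : W = (∑ x ∈ UA, (w0 x : ℝ)) + ∑ x ∈ UB, (w0 x : ℝ) := by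
      rw [hW, hTv, Finset.sum_union hdisjAB]
    have hUBsum : ∑ x ∈ UB, (w0 x : ℝ) = ∑ i : Fin s, ∑ x ∈ B i, (w0 x : ℝ) :=
      Finset.sum_biUnion (fun i _ i' _ hne => hBdisj i i' hne)
    have hUAsum : ∑ x ∈ UA, (w0 x : ℝ) = ∑ j : Fin r, ∑ x ∈ A j, (w0 x : ℝ) :=
      Finset.sum_biUnion (fun j _ j' _ hne => hAdisj j j' hne)
    have hneAB : ∀ u ∈ UA, ∀ v ∈ UB, u ≠ v := by
      intro u hu v hv he
      exact Finset.disjoint_left.mp hdisjAB hu (he ▸ hv)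
    by_cases hB : ∀ i : Fin s, (∑ x ∈ B i, (w0 x : ℝ)) ≤ c * W
    · -- recurse into T1, contracting each B i to b i
      set w1 : α → ℕ := fun v =>
        if h : ∃ i : Fin s, b i = v then ∑ x ∈ B h.choose, w0 x else w0 v with hw1def
      have hw1b : ∀ i, w1 (b i) = ∑ x ∈ B i, w0 x := by
        intro i
        have h : ∃ i' : Fin s, b i' = b i := ⟨i, rfl⟩
        have hch : h.choose = i := hbinj h.choose_spec
        simp only [hw1def, dif_pos h, hch]
      have hw1A : ∀ v ∈ UA, w1 v = w0 v := by
        intro v hv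
        have h : ¬ ∃ i : Fin s, b i = v := by
          rintro ⟨i, rfl⟩
          exact hbnotUA i hv
        simp only [hw1def, dif_neg h]
      have hdisj_im : Disjoint UA (Finset.univ.image b) := by
        rw [Finset.disjoint_right]
        intro x hx
        obtain ⟨i, _, rfl⟩ := Finset.mem_image.mp hx
        exact hbnotUA i
      have hbinj' : ∀ x ∈ (Finset.univ : Finset (Fin s)), ∀ y ∈ (Finset.univ : Finset (Fin s)),
          b x = b y → x = y := fun x _ y _ h => hbinj h
      have hsum1 : ∑ x ∈ T1.verts, (w1 x : ℝ) = W := by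
        rw [hT1v, Finset.sum_union hdisj_im, Finset.sum_image hbinj']
        have e1 : ∑ x ∈ UA, (w1 x : ℝ) = ∑ x ∈ UA, (w0 x : ℝ) :=
          Finset.sum_congr rfl fun x hx => by rw [hw1A x hx]
        have e2 : ∑ i : Fin s, (w1 (b i) : ℝ) = ∑ i : Fin s, ∑ x ∈ B i, (w0 x : ℝ) :=
          Finset.sum_congr rfl fun i _ => by rw [hw1b i]; push_cast; ring
        rw [e1, e2, hWsplit, hUBsum]
      have hbal1 : ∀ v ∈ T1.verts, (w1 v : ℝ) ≤ c * ∑ x ∈ T1.verts, (w1 x : ℝ) := by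
        intro v hv
        rw [hsum1]
        rw [hT1v, Finset.mem_union] at hv
        rcases hv with hv | hv
        · rw [hw1A v hv]
          exact hw0 v (hUAT hv)
        · obtain ⟨i, _, rfl⟩ := Finset.mem_image.mp hv
          have : (w1 (b i) : ℝ) = ∑ x ∈ B i, (w0 x : ℝ) := by rw [hw1b i]; push_cast; ring
          rw [this]
          exact hB i
      have hedge1 : ∃ u v, T1.StrongAdj u v ∨ T1.StrongAntiAdj u v := by
        have hr0 : 0 < r := hr1
        have hs0 : 0 < s := hs1
        set j1 : Fin r := ⟨0, hr0⟩
        set i1 : Fin s := ⟨0, hs0⟩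
        obtain ⟨u, hu⟩ := hAne j1
        have hbne : b i1 ≠ u := fun he => hbA i1 j1 (he ▸ hu)
        have huT1 : u ∈ T1.verts := hUAsub1 (hAsubUA j1 hu)
        rcases hdich i1 j1 with ⟨hp, _⟩ | ⟨hp, _⟩
        · exact ⟨b i1, u, Or.inl ⟨himb1 i1, huT1, hbne, hp u hu⟩⟩
        · exact ⟨b i1, u, Or.inr ⟨himb1 i1, huT1, hbne, hp u hu⟩⟩
      obtain ⟨U1, U2, hU1, hU2, hUdisj, hUstrong, hUwt⟩ := ih1 hedge1 w1 hbal1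
      rw [hsum1] at hUwt
      set S1 : Finset (Fin s) := Finset.univ.filter (fun i => b i ∈ U1) with hS1def
      set S2 : Finset (Fin s) := Finset.univ.filter (fun i => b i ∈ U2) with hS2def
      set V1 : Finset α := (U1 ∩ UA) ∪ S1.biUnion B with hV1def
      set V2 : Finset α := (U2 ∩ UA) ∪ S2.biUnion B with hV2def
      have hmemV1 : ∀ x, x ∈ V1 ↔ (x ∈ U1 ∧ x ∈ UA) ∨ ∃ i, b i ∈ U1 ∧ x ∈ B i := by
        intro x
        simp [hV1def, hS1def, Finset.mem_union, Finset.mem_inter, Finset.mem_biUnion,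
          Finset.mem_filter, and_comm]
      have hmemV2 : ∀ x, x ∈ V2 ↔ (x ∈ U2 ∧ x ∈ UA) ∨ ∃ i, b i ∈ U2 ∧ x ∈ B i := by
        intro x
        simp [hV2def, hS2def, Finset.mem_union, Finset.mem_inter, Finset.mem_biUnion,
          Finset.mem_filter, and_comm]
      have hV1T : V1 ⊆ T.verts := by
        intro x hx
        rcases (hmemV1 x).mp hx with ⟨_, hx⟩ | ⟨i, _, hx⟩
        · exact hUAT hx
        · exact hUBT (hBsubUB i hx)
      have hV2T : V2 ⊆ T.verts := by
        intro x hx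
        rcases (hmemV2 x).mp hx with ⟨_, hx⟩ | ⟨i, _, hx⟩
        · exact hUAT hx
        · exact hUBT (hBsubUB i hx)
      have hVdisj : Disjoint V1 V2 := by
        rw [Finset.disjoint_left]
        intro x hx1 hx2
        rcases (hmemV1 x).mp hx1 with ⟨hxU1, hxA⟩ | ⟨i, hbi, hxB⟩ <;>
          rcases (hmemV2 x).mp hx2 with ⟨hxU2, hxA'⟩ | ⟨i', hbi', hxB'⟩
        · exact Finset.disjoint_left.mp hUdisj hxU1 hxU2
        · exact Finset.disjoint_left.mp hdisjAB hxA (hBsubUB i' hxB')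
        · exact Finset.disjoint_left.mp hdisjAB hxA' (hBsubUB i hxB)
        · rcases eq_or_ne i i' with rfl | hne
          · exact Finset.disjoint_left.mp hUdisj hbi hbi'
          · exact Finset.disjoint_left.mp (hBdisj i i' hne) hxB hxB'
      have main : ∀ e : ℤ, (e = 1 ∨ e = -1) → (∀ u ∈ U1, ∀ v ∈ U2, T1.theta u v = e) →
          ∀ u ∈ V1, ∀ v ∈ V2,
            u ∈ T.verts ∧ v ∈ T.verts ∧ u ≠ v ∧ T.theta u v = e := by
        intro e he hstr u hu v hv
        refine ⟨hV1T hu, hV2T hv, fun heq => Finset.disjoint_left.mp hVdisj hu (heq ▸ hv), ?_⟩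
        rcases (hmemV1 u).mp hu with ⟨huU1, huA⟩ | ⟨i, hbiU1, huB⟩ <;>
          rcases (hmemV2 v).mp hv with ⟨hvU2, hvA⟩ | ⟨i', hbiU2, hvB⟩
        · rw [hTA u huA v hvA]
          exact hstr u huU1 v hvU2
        · obtain ⟨j, huj⟩ := (hmemUA u).mp huA
          have h1 : T1.theta (b i') u = e := by
            rw [T1.symm]
            exact hstr u huU1 (b i') hbiU2
          rcases hdich i' j with ⟨hp, _⟩ | ⟨hp, _⟩
          · rw [(hTcross j i' u huj v hvB).1 hp, ← h1, hp u huj]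
          · rw [(hTcross j i' u huj v hvB).2 hp, ← h1, hp u huj]
        · obtain ⟨j, hvj⟩ := (hmemUA v).mp hvA
          have h1 : T1.theta (b i) v = e := hstr (b i) hbiU1 v hvU2
          rw [T.symm]
          rcases hdich i j with ⟨hp, _⟩ | ⟨hp, _⟩
          · rw [(hTcross j i v hvj u huB).1 hp, ← h1, hp v hvj]
          · rw [(hTcross j i v hvj u huB).2 hp, ← h1, hp v hvj]
        · rcases eq_or_ne i i' with rfl | hne
          · exact absurd hbiU2 (Finset.disjoint_left.mp hUdisj hbiU1)
          · have h1 : T1.theta (b i) (b i') = e := hstr (b i) hbiU1 (b i') hbiU2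
            rw [hbb0 i i' hne] at h1
            rcases he with rfl | rfl <;> exact absurd h1.symm (by norm_num)
      have hS1img : U1 ∩ Finset.univ.image b = S1.image b := by
        ext x
        simp only [Finset.mem_inter, Finset.mem_image, hS1def, Finset.mem_filter,
          Finset.mem_univ, true_and]
        constructor
        · rintro ⟨hx, i, rfl⟩
          exact ⟨i, hx, rfl⟩
        · rintro ⟨i, hx, rfl⟩
          exact ⟨hx, i, rfl⟩
      have hS2img : U2 ∩ Finset.univ.image b = S2.image b := by
        ext x
        simp only [Finset.mem_inter, Finset.mem_image, hS2def, Finset.mem_filter,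
          Finset.mem_univ, true_and]
        constructor
        · rintro ⟨hx, i, rfl⟩
          exact ⟨i, hx, rfl⟩
        · rintro ⟨i, hx, rfl⟩
          exact ⟨hx, i, rfl⟩
      have hwtV : ∀ (U V : Finset α) (S : Finset (Fin s)), U ⊆ T1.verts →
          U ∩ Finset.univ.image b = S.image b → V = (U ∩ UA) ∪ S.biUnion B →
          ∑ x ∈ V, (w0 x : ℝ) = ∑ x ∈ U, (w1 x : ℝ) := by
        intro U V S hUsub hSimg hVdef'
        have hUsplit : U = (U ∩ UA) ∪ (U ∩ Finset.univ.image b) := by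
          rw [← Finset.inter_union_distrib_left]
          rw [← hT1v]
          exact (Finset.inter_eq_left.mpr hUsub).symm
        have hdisj' : Disjoint (U ∩ UA) (U ∩ Finset.univ.image b) :=
          (hdisj_im.mono (Finset.inter_subset_right) (Finset.inter_subset_right))
        have hdisjV' : Disjoint (U ∩ UA) (S.biUnion B) := by
          apply Finset.disjoint_left.mpr
          intro x hx hxB
          obtain ⟨i, _, hxB⟩ := Finset.mem_biUnion.mp hxB
          exact Finset.disjoint_left.mp hdisjAB (Finset.mem_inter.mp hx).2 (hBsubUB i hxB)
        rw [hVdef', Finset.sum_union hdisjV']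
        conv_rhs => rw [hUsplit]
        rw [Finset.sum_union hdisj', hSimg, Finset.sum_image (fun x _ y _ h => hbinj h)]
        congr 1
        · exact Finset.sum_congr rfl fun x hx => by
            rw [hw1A x (Finset.mem_inter.mp hx).2]
        · rw [Finset.sum_biUnion (fun i _ i' _ hne => hBdisj i i' hne)]
          exact Finset.sum_congr rfl fun i _ => by rw [hw1b i]; push_cast; ring
      have hwtV1 : ∑ x ∈ V1, (w0 x : ℝ) = ∑ x ∈ U1, (w1 x : ℝ) :=
        hwtV U1 V1 S1 hU1 hS1img hV1def
      have hwtV2 : ∑ x ∈ V2, (w0 x : ℝ) = ∑ x ∈ U2, (w1 x : ℝ) :=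
        hwtV U2 V2 S2 hU2 hS2img hV2def
      refine ⟨V1, V2, hV1T, hV2T, hVdisj, ?_, ?_⟩
      · rcases hUstrong with hs' | hs'
        · exact Or.inl fun u hu v hv => main 1 (Or.inl rfl)
            (fun u hu v hv => (hs' u hu v hv).2.2.2) u hu v hv
        · exact Or.inr fun u hu v hv => main (-1) (Or.inr rfl)
            (fun u hu v hv => (hs' u hu v hv).2.2.2) u hu v hv
      · rw [hwtV1, hwtV2]
        exact hUwt
    · push_neg at hB
      obtain ⟨i0, hi0⟩ := hB
      by_cases hA : ∀ j : Fin r, (∑ x ∈ A j, (w0 x : ℝ)) ≤ c * W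
      · -- recurse into T2, contracting each A j to a j
        set w2 : α → ℕ := fun v =>
          if h : ∃ j : Fin r, a j = v then ∑ x ∈ A h.choose, w0 x else w0 v with hw2def
        have hw2a : ∀ j, w2 (a j) = ∑ x ∈ A j, w0 x := by
          intro j
          have h : ∃ j' : Fin r, a j' = a j := ⟨j, rfl⟩
          have hch : h.choose = j := hainj h.choose_spec
          simp only [hw2def, dif_pos h, hch]
        have hw2B : ∀ v ∈ UB, w2 v = w0 v := by
          intro v hv
          have h : ¬ ∃ j : Fin r, a j = v := by
            rintro ⟨j, rfl⟩
            exact hanotUB j hv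
          simp only [hw2def, dif_neg h]
        have hdisj_im : Disjoint UB (Finset.univ.image a) := by
          rw [Finset.disjoint_right]
          intro x hx
          obtain ⟨j, _, rfl⟩ := Finset.mem_image.mp hx
          exact hanotUB j
        have hainj' : ∀ x ∈ (Finset.univ : Finset (Fin r)), ∀ y ∈ (Finset.univ : Finset (Fin r)),
            a x = a y → x = y := fun x _ y _ h => hainj h
        have hsum2 : ∑ x ∈ T2.verts, (w2 x : ℝ) = W := by
          rw [hT2v, Finset.sum_union hdisj_im, Finset.sum_image hainj']
          have e1 : ∑ x ∈ UB, (w2 x : ℝ) = ∑ x ∈ UB, (w0 x : ℝ) :=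
            Finset.sum_congr rfl fun x hx => by rw [hw2B x hx]
          have e2 : ∑ j : Fin r, (w2 (a j) : ℝ) = ∑ j : Fin r, ∑ x ∈ A j, (w0 x : ℝ) :=
            Finset.sum_congr rfl fun j _ => by rw [hw2a j]; push_cast; ring
          rw [e1, e2, hWsplit, hUAsum]
          ring
        have hbal2 : ∀ v ∈ T2.verts, (w2 v : ℝ) ≤ c * ∑ x ∈ T2.verts, (w2 x : ℝ) := by
          intro v hv
          rw [hsum2]
          rw [hT2v, Finset.mem_union] at hv
          rcases hv with hv | hv
          · rw [hw2B v hv]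
            exact hw0 v (hUBT hv)
          · obtain ⟨j, _, rfl⟩ := Finset.mem_image.mp hv
            have : (w2 (a j) : ℝ) = ∑ x ∈ A j, (w0 x : ℝ) := by rw [hw2a j]; push_cast; ring
            rw [this]
            exact hA j
        have hedge2 : ∃ u v, T2.StrongAdj u v ∨ T2.StrongAntiAdj u v := by
          have hr0 : 0 < r := hr1
          have hs0 : 0 < s := hs1
          set j1 : Fin r := ⟨0, hr0⟩
          set i1 : Fin s := ⟨0, hs0⟩
          obtain ⟨u, hu⟩ := hBne i1
          have hane : a j1 ≠ u := fun he => haB j1 i1 (he ▸ hu)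
          have huT2 : u ∈ T2.verts := hUBsub2 (hBsubUB i1 hu)
          rcases hdich i1 j1 with ⟨_, hq⟩ | ⟨_, hq⟩
          · exact ⟨a j1, u, Or.inl ⟨hima2 j1, huT2, hane, hq u hu⟩⟩
          · exact ⟨a j1, u, Or.inr ⟨hima2 j1, huT2, hane, hq u hu⟩⟩
        obtain ⟨U1, U2, hU1, hU2, hUdisj, hUstrong, hUwt⟩ := ih2 hedge2 w2 hbal2
        rw [hsum2] at hUwt
        set S1 : Finset (Fin r) := Finset.univ.filter (fun j => a j ∈ U1) with hS1def
        set S2 : Finset (Fin r) := Finset.univ.filter (fun j => a j ∈ U2) with hS2def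
        set V1 : Finset α := (U1 ∩ UB) ∪ S1.biUnion A with hV1def
        set V2 : Finset α := (U2 ∩ UB) ∪ S2.biUnion A with hV2def
        have hmemV1 : ∀ x, x ∈ V1 ↔ (x ∈ U1 ∧ x ∈ UB) ∨ ∃ j, a j ∈ U1 ∧ x ∈ A j := by
          intro x
          simp [hV1def, hS1def, Finset.mem_union, Finset.mem_inter, Finset.mem_biUnion,
            Finset.mem_filter, and_comm]
        have hmemV2 : ∀ x, x ∈ V2 ↔ (x ∈ U2 ∧ x ∈ UB) ∨ ∃ j, a j ∈ U2 ∧ x ∈ A j := by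
          intro x
          simp [hV2def, hS2def, Finset.mem_union, Finset.mem_inter, Finset.mem_biUnion,
            Finset.mem_filter, and_comm]
        have hV1T : V1 ⊆ T.verts := by
          intro x hx
          rcases (hmemV1 x).mp hx with ⟨_, hx⟩ | ⟨j, _, hx⟩
          · exact hUBT hx
          · exact hUAT (hAsubUA j hx)
        have hV2T : V2 ⊆ T.verts := by
          intro x hx
          rcases (hmemV2 x).mp hx with ⟨_, hx⟩ | ⟨j, _, hx⟩
          · exact hUBT hx
          · exact hUAT (hAsubUA j hx)
        have hVdisj : Disjoint V1 V2 := by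
          rw [Finset.disjoint_left]
          intro x hx1 hx2
          rcases (hmemV1 x).mp hx1 with ⟨hxU1, hxB⟩ | ⟨j, haj, hxA⟩ <;>
            rcases (hmemV2 x).mp hx2 with ⟨hxU2, hxB'⟩ | ⟨j', haj', hxA'⟩
          · exact Finset.disjoint_left.mp hUdisj hxU1 hxU2
          · exact Finset.disjoint_left.mp hdisjAB (hAsubUA j' hxA') hxB
          · exact Finset.disjoint_left.mp hdisjAB (hAsubUA j hxA) hxB'
          · rcases eq_or_ne j j' with rfl | hne
            · exact Finset.disjoint_left.mp hUdisj haj haj'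
            · exact Finset.disjoint_left.mp (hAdisj j j' hne) hxA hxA'
        have main : ∀ e : ℤ, (e = 1 ∨ e = -1) → (∀ u ∈ U1, ∀ v ∈ U2, T2.theta u v = e) →
            ∀ u ∈ V1, ∀ v ∈ V2,
              u ∈ T.verts ∧ v ∈ T.verts ∧ u ≠ v ∧ T.theta u v = e := by
          intro e he hstr u hu v hv
          refine ⟨hV1T hu, hV2T hv, fun heq => Finset.disjoint_left.mp hVdisj hu (heq ▸ hv), ?_⟩
          rcases (hmemV1 u).mp hu with ⟨huU1, huB⟩ | ⟨j, hajU1, huA⟩ <;>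
            rcases (hmemV2 v).mp hv with ⟨hvU2, hvB⟩ | ⟨j', hajU2, hvA⟩
          · rw [hTB u huB v hvB]
            exact hstr u huU1 v hvU2
          · obtain ⟨i, hui⟩ := (hmemUB u).mp huB
            have h1 : T2.theta (a j') u = e := by
              rw [T2.symm]
              exact hstr u huU1 (a j') hajU2
            rw [T.symm]
            rcases hdich i j' with ⟨hp, hq⟩ | ⟨hp, hq⟩
            · rw [(hTcross j' i v hvA u hui).1 hp, ← h1, hq u hui]
            · rw [(hTcross j' i v hvA u hui).2 hp, ← h1, hq u hui]
          · obtain ⟨i, hvi⟩ := (hmemUB v).mp hvB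
            have h1 : T2.theta (a j) v = e := hstr (a j) hajU1 v hvU2
            rcases hdich i j with ⟨hp, hq⟩ | ⟨hp, hq⟩
            · rw [(hTcross j i u huA v hvi).1 hp, ← h1, hq v hvi]
            · rw [(hTcross j i u huA v hvi).2 hp, ← h1, hq v hvi]
          · rcases eq_or_ne j j' with rfl | hne
            · exact absurd hajU2 (Finset.disjoint_left.mp hUdisj hajU1)
            · have h1 : T2.theta (a j) (a j') = e := hstr (a j) hajU1 (a j') hajU2
              rw [haa0 j j' hne] at h1
              rcases he with rfl | rfl <;> exact absurd h1.symm (by norm_num)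
        have hS1img : U1 ∩ Finset.univ.image a = S1.image a := by
          ext x
          simp only [Finset.mem_inter, Finset.mem_image, hS1def, Finset.mem_filter,
            Finset.mem_univ, true_and]
          constructor
          · rintro ⟨hx, j, rfl⟩
            exact ⟨j, hx, rfl⟩
          · rintro ⟨j, hx, rfl⟩
            exact ⟨hx, j, rfl⟩
        have hS2img : U2 ∩ Finset.univ.image a = S2.image a := by
          ext x
          simp only [Finset.mem_inter, Finset.mem_image, hS2def, Finset.mem_filter,
            Finset.mem_univ, true_and]
          constructor
          · rintro ⟨hx, j, rfl⟩
            exact ⟨j, hx, rfl⟩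
          · rintro ⟨j, hx, rfl⟩
            exact ⟨hx, j, rfl⟩
        have hwtV : ∀ (U V : Finset α) (S : Finset (Fin r)), U ⊆ T2.verts →
            U ∩ Finset.univ.image a = S.image a → V = (U ∩ UB) ∪ S.biUnion A →
            ∑ x ∈ V, (w0 x : ℝ) = ∑ x ∈ U, (w2 x : ℝ) := by
          intro U V S hUsub hSimg hVdef'
          have hUsplit : U = (U ∩ UB) ∪ (U ∩ Finset.univ.image a) := by
            rw [← Finset.inter_union_distrib_left]
            rw [← hT2v]
            exact (Finset.inter_eq_left.mpr hUsub).symm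
          have hdisj' : Disjoint (U ∩ UB) (U ∩ Finset.univ.image a) :=
            (hdisj_im.mono (Finset.inter_subset_right) (Finset.inter_subset_right))
          have hdisjV' : Disjoint (U ∩ UB) (S.biUnion A) := by
            apply Finset.disjoint_left.mpr
            intro x hx hxA
            obtain ⟨j, _, hxA⟩ := Finset.mem_biUnion.mp hxA
            exact Finset.disjoint_left.mp hdisjAB (hAsubUA j hxA) (Finset.mem_inter.mp hx).2
          rw [hVdef', Finset.sum_union hdisjV']
          conv_rhs => rw [hUsplit]
          rw [Finset.sum_union hdisj', hSimg, Finset.sum_image (fun x _ y _ h => hainj h)]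
          congr 1
          · exact Finset.sum_congr rfl fun x hx => by
              rw [hw2B x (Finset.mem_inter.mp hx).2]
          · rw [Finset.sum_biUnion (fun j _ j' _ hne => hAdisj j j' hne)]
            exact Finset.sum_congr rfl fun j _ => by rw [hw2a j]; push_cast; ring
        have hwtV1 : ∑ x ∈ V1, (w0 x : ℝ) = ∑ x ∈ U1, (w2 x : ℝ) :=
          hwtV U1 V1 S1 hU1 hS1img hV1def
        have hwtV2 : ∑ x ∈ V2, (w0 x : ℝ) = ∑ x ∈ U2, (w2 x : ℝ) :=
          hwtV U2 V2 S2 hU2 hS2img hV2def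
        refine ⟨V1, V2, hV1T, hV2T, hVdisj, ?_, ?_⟩
        · rcases hUstrong with hs' | hs'
          · exact Or.inl fun u hu v hv => main 1 (Or.inl rfl)
              (fun u hu v hv => (hs' u hu v hv).2.2.2) u hu v hv
          · exact Or.inr fun u hu v hv => main (-1) (Or.inr rfl)
              (fun u hu v hv => (hs' u hu v hv).2.2.2) u hu v hv
        · rw [hwtV1, hwtV2]
          exact hUwt
      · push_neg at hA
        obtain ⟨j0, hj0⟩ := hA
        refine ⟨A j0, B i0, fun x hx => hUAT (hAsubUA j0 hx),
          fun x hx => hUBT (hBsubUB i0 hx),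
          hdisjAB.mono (hAsubUA j0) (hBsubUB i0), ?_,
          le_min hj0.le hi0.le⟩
        rcases hdich i0 j0 with ⟨hp, _⟩ | ⟨hp, _⟩
        · refine Or.inl fun u hu v hv => ⟨hUAT (hAsubUA j0 hu), hUBT (hBsubUB i0 hv),
            hneAB u (hAsubUA j0 hu) v (hBsubUB i0 hv), (hTcross j0 i0 u hu v hv).1 hp⟩
        · refine Or.inr fun u hu v hv => ⟨hUAT (hAsubUA j0 hu), hUBT (hBsubUB i0 hv),
            hneAB u (hAsubUA j0 hu) v (hBsubUB i0 hv), (hTcross j0 i0 u hu v hv).2 hp⟩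
end

section
/- Let k ≥ 1 and let c > 0 with ck < 1/2, and let 𝒞 be a class of finite simple graphs, closed under induced subgraphs, that is ck-good. Then every trigraph T0 in closure(𝒞^{≤k}) containing at least one strongly adjacent pair or at least one strongly antiadjacent pair admits a biclique or a complement biclique (V1, V2) with min(|V1|, |V2|) ≥ c·|V(T0)|. -/
namespace FTG19aux

open Finset

variable {α : Type} [DecidableEq α]

def Concl (c : ℝ) (T : FTG α) (w : α → ℕ) : Prop :=
  ∃ V1 V2 : Finset α, V1 ⊆ T.verts ∧ V2 ⊆ T.verts ∧ Disjoint V1 V2 ∧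
    ((∀ u ∈ V1, ∀ v ∈ V2, T.StrongAdj u v) ∨ (∀ u ∈ V1, ∀ v ∈ V2, T.StrongAntiAdj u v)) ∧
    c * (∑ x ∈ T.verts, (w x : ℝ)) ≤ min (∑ x ∈ V1, (w x : ℝ)) (∑ x ∈ V2, (w x : ℝ))

lemma base_case (k : ℕ) (hk : 1 ≤ k) (c : ℝ) (hc : 0 < c) (hck : c * k < 1/2)
    (C : Set (FTG α)) (hered : FTG.ClosedUnderInduced C) (hgood : FTG.IsGood (c*k) C)
    (T : FTG α) (h : FTG.InCk C k T) (w : α → ℕ)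
    (hbal : ∀ v ∈ T.verts, (w v : ℝ) ≤ c * ∑ x ∈ T.verts, (w x : ℝ)) :
    Concl c T w := by
  obtain ⟨⟨P, hPU, hPd, hPc, hPsw, hPcr⟩, G, hGC, hreal⟩ := h
  obtain ⟨hGv, hGgraph, hGreal⟩ := hreal
  have hWnn : (0:ℝ) ≤ ∑ x ∈ T.verts, (w x : ℝ) :=
    Finset.sum_nonneg fun x _ => by positivity
  by_cases hP2 : 2 ≤ P.card
  · -- main case
    obtain ⟨p₀, hp₀⟩ : P.Nonempty := Finset.card_pos.mp (by omega)
    obtain ⟨v₀, hv₀⟩ : p₀.Nonempty := Finset.card_pos.mp (hPc p₀ hp₀).1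
    have hex : ∀ p : Finset α, ∃ x, p ∈ P → (x ∈ p ∧ ∀ y ∈ p, w y ≤ w x) := by
      intro p
      by_cases hp : p ∈ P
      · obtain ⟨x, hx, hmax⟩ :=
          Finset.exists_max_image p w (Finset.card_pos.mp (hPc p hp).1)
        exact ⟨x, fun _ => ⟨hx, hmax⟩⟩
      · exact ⟨v₀, fun hmem => absurd hmem hp⟩
    choose f hf using hex
    have hfmem : ∀ p ∈ P, f p ∈ p := fun p hp => (hf p hp).1
    have hfmax : ∀ p ∈ P, ∀ y ∈ p, w y ≤ w (f p) := fun p hp => (hf p hp).2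
    have hinj : ∀ p ∈ P, ∀ q ∈ P, f p = f q → p = q := by
      intro p hp q hq hfe
      by_contra hne
      exact Finset.disjoint_left.mp (hPd p hp q hq hne) (hfmem p hp)
        (by rw [hfe]; exact hfmem q hq)
    set reps : Finset α := P.image f with hreps
    have hrsub : reps ⊆ T.verts := by
      intro x hx
      obtain ⟨p, hp, rfl⟩ := Finset.mem_image.mp hx
      rw [← hPU]
      exact Finset.mem_biUnion.mpr ⟨p, hp, hfmem p hp⟩
    set G' : FTG α := FTG.mk reps G.theta G.symm G.range with hG'
    have hG'C : G' ∈ C := hered G hGC reps (by rw [hGv]; exact hrsub)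
    set w' : α → ℕ := fun x => ∑ p ∈ P.filter (fun q => x ∈ q), ∑ y ∈ p, w y with hw'
    have hfilter : ∀ p ∈ P, P.filter (fun q => f p ∈ q) = {p} := by
      intro p hp
      ext q
      simp only [Finset.mem_filter, Finset.mem_singleton]
      constructor
      · rintro ⟨hq, hfq⟩
        by_contra hne
        exact Finset.disjoint_left.mp (hPd q hq p hp hne) hfq (hfmem p hp)
      · rintro rfl; exact ⟨hp, hfmem _ hp⟩
    have hw'f : ∀ p ∈ P, w' (f p) = ∑ y ∈ p, w y := by
      intro p hp
      show ∑ q ∈ P.filter (fun q => f p ∈ q), ∑ y ∈ q, w y = ∑ y ∈ p, w y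
      rw [hfilter p hp, Finset.sum_singleton]
    have hsumN : ∑ x ∈ reps, w' x = ∑ x ∈ T.verts, w x := by
      have hB : ∑ x ∈ P.biUnion id, w x = ∑ p ∈ P, ∑ y ∈ p, w y :=
        Finset.sum_biUnion (fun p hp q hq hne =>
          hPd p (Finset.mem_coe.mp hp) q (Finset.mem_coe.mp hq) hne)
      rw [hreps, Finset.sum_image hinj, ← hPU, hB]
      exact Finset.sum_congr rfl (fun p hp => hw'f p hp)
    have hsumR : ∑ x ∈ reps, (w' x : ℝ) = ∑ x ∈ T.verts, (w x : ℝ) := by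
      rw [← Nat.cast_sum, ← Nat.cast_sum, hsumN]
    have h2 : 2 ≤ G'.verts.card := by
      have hcardim : reps.card = P.card :=
        Finset.card_image_of_injOn (fun p hp q hq hpq =>
          hinj p (Finset.mem_coe.mp hp) q (Finset.mem_coe.mp hq) hpq)
      show 2 ≤ reps.card
      omega
    have hbal' : ∀ v ∈ G'.verts, (w' v : ℝ) ≤ (c*k) * ∑ x ∈ G'.verts, (w' x : ℝ) := by
      intro v hv
      have hv' : v ∈ reps := hv
      show (w' v : ℝ) ≤ (c*k) * ∑ x ∈ reps, (w' x : ℝ)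
      rw [hsumR]
      obtain ⟨p, hp, rfl⟩ := Finset.mem_image.mp hv'
      rw [hw'f p hp]
      have hcast : ((∑ y ∈ p, w y : ℕ) : ℝ) = ∑ y ∈ p, (w y : ℝ) := by push_cast; rfl
      rw [hcast]
      have hWnn' : 0 ≤ c * ∑ x ∈ T.verts, (w x : ℝ) := mul_nonneg hc.le hWnn
      calc ∑ y ∈ p, (w y : ℝ)
          ≤ ∑ y ∈ p, c * ∑ x ∈ T.verts, (w x : ℝ) := by
            apply Finset.sum_le_sum
            intro y hy
            exact hbal y (by rw [← hPU]; exact Finset.mem_biUnion.mpr ⟨p, hp, hy⟩)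
        _ = (p.card : ℝ) * (c * ∑ x ∈ T.verts, (w x : ℝ)) := by
            rw [Finset.sum_const, nsmul_eq_mul]
        _ ≤ (k : ℝ) * (c * ∑ x ∈ T.verts, (w x : ℝ)) := by
            apply mul_le_mul_of_nonneg_right _ hWnn'
            exact_mod_cast (hPc p hp).2
        _ = (c*k) * ∑ x ∈ T.verts, (w x : ℝ) := by ring
    obtain ⟨V1, V2, hV1, hV2, hV12, hstrong, hmin⟩ := hgood G' hG'C h2 w' hbal'
    have hV1' : V1 ⊆ reps := hV1
    have hV2' : V2 ⊆ reps := hV2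
    have htrans : ∀ u v : α, u ∈ reps → v ∈ reps → u ≠ v → T.theta u v = G.theta u v := by
      intro u v hu hv hne
      have huT : u ∈ T.verts := hrsub hu
      have hvT : v ∈ T.verts := hrsub hv
      have hT0 : T.theta u v ≠ 0 := by
        intro h0
        obtain ⟨p, hp, rfl⟩ := Finset.mem_image.mp hu
        obtain ⟨q, hq, rfl⟩ := Finset.mem_image.mp hv
        have hpq : p ≠ q := fun hh => hne (by rw [hh])
        have hiff := hPcr (f p) (f q) huT hvT hne h0 p hp
        exact Finset.disjoint_left.mp (hPd p hp q hq hpq)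
          (hiff.mp (hfmem p hp)) (hfmem q hq)
      rcases T.range u v with hth | hth | hth
      · rw [hth, (hGreal u v huT hvT hne).2 hth]
      · exact absurd hth hT0
      · rw [hth, (hGreal u v huT hvT hne).1 hth]
    have hSA : ∀ u v, G'.StrongAdj u v → T.StrongAdj u v := by
      intro u v huv
      obtain ⟨hu, hv, hne, hθ⟩ := huv
      exact ⟨hrsub hu, hrsub hv, hne, by rw [htrans u v hu hv hne]; exact hθ⟩
    have hSAA : ∀ u v, G'.StrongAntiAdj u v → T.StrongAntiAdj u v := by
      intro u v huv
      obtain ⟨hu, hv, hne, hθ⟩ := huv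
      exact ⟨hrsub hu, hrsub hv, hne, by rw [htrans u v hu hv hne]; exact hθ⟩
    have hkey : ∀ (V : Finset α), V ⊆ reps →
        ∑ x ∈ V, (w' x : ℝ) ≤ (k:ℝ) * ∑ x ∈ V, (w x : ℝ) := by
      intro V hV
      rw [Finset.mul_sum]
      apply Finset.sum_le_sum
      intro x hx
      obtain ⟨p, hp, rfl⟩ := Finset.mem_image.mp (hV hx)
      rw [hw'f p hp]
      have hcast : ((∑ y ∈ p, w y : ℕ) : ℝ) = ∑ y ∈ p, (w y : ℝ) := by push_cast; rfl
      rw [hcast]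
      calc ∑ y ∈ p, (w y : ℝ) ≤ ∑ y ∈ p, (w (f p) : ℝ) := by
            apply Finset.sum_le_sum
            intro y hy
            exact_mod_cast hfmax p hp y hy
        _ = (p.card : ℝ) * (w (f p) : ℝ) := by rw [Finset.sum_const, nsmul_eq_mul]
        _ ≤ (k : ℝ) * (w (f p) : ℝ) := by
            apply mul_le_mul_of_nonneg_right _ (by positivity)
            exact_mod_cast (hPc p hp).2
    have hkpos : (0:ℝ) < k := by exact_mod_cast hk
    refine ⟨V1, V2, hV1'.trans hrsub, hV2'.trans hrsub, hV12, ?_, ?_⟩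
    · exact hstrong.imp (fun hh u hu v hv => hSA u v (hh u hu v hv))
        (fun hh u hu v hv => hSAA u v (hh u hu v hv))
    · have hminrw : (c*k) * ∑ x ∈ T.verts, (w x : ℝ) ≤
          min (∑ x ∈ V1, (w' x : ℝ)) (∑ x ∈ V2, (w' x : ℝ)) := by
        have : ∑ x ∈ G'.verts, (w' x : ℝ) = ∑ x ∈ T.verts, (w x : ℝ) := hsumR
        rw [← this]; exact hmin
      refine le_min ?_ ?_
      · have h1 : (c*k) * ∑ x ∈ T.verts, (w x : ℝ) ≤ ∑ x ∈ V1, (w' x : ℝ) :=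
          hminrw.trans (min_le_left _ _)
        have h2 := hkey V1 hV1'
        nlinarith
      · have h1 : (c*k) * ∑ x ∈ T.verts, (w x : ℝ) ≤ ∑ x ∈ V2, (w' x : ℝ) :=
          hminrw.trans (min_le_right _ _)
        have h2 := hkey V2 hV2'
        nlinarith
  · -- degenerate case: at most one part, total weight is zero
    have hcard : T.verts.card ≤ k := by
      have h1 : P.card ≤ 1 := by omega
      calc T.verts.card = (P.biUnion id).card := by rw [hPU]
        _ ≤ ∑ p ∈ P, (id p).card := Finset.card_biUnion_le
        _ ≤ ∑ _p ∈ P, k := Finset.sum_le_sum (fun p hp => (hPc p hp).2)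
        _ = P.card * k := by rw [Finset.sum_const, smul_eq_mul]
        _ ≤ 1 * k := Nat.mul_le_mul_right k h1
        _ = k := one_mul k
    have hW0 : ∑ x ∈ T.verts, (w x : ℝ) = 0 := by
      by_contra h0
      have hWpos : 0 < ∑ x ∈ T.verts, (w x : ℝ) := lt_of_le_of_ne hWnn (Ne.symm h0)
      have hcR : (T.verts.card : ℝ) ≤ k := by exact_mod_cast hcard
      have h2 : ∑ x ∈ T.verts, (w x : ℝ) ≤
          (T.verts.card : ℝ) * (c * ∑ x ∈ T.verts, (w x : ℝ)) := by
        calc ∑ x ∈ T.verts, (w x : ℝ)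
            ≤ ∑ _x ∈ T.verts, c * ∑ x ∈ T.verts, (w x : ℝ) := Finset.sum_le_sum hbal
          _ = (T.verts.card : ℝ) * (c * ∑ x ∈ T.verts, (w x : ℝ)) := by
              rw [Finset.sum_const, nsmul_eq_mul]
      nlinarith [mul_pos hc hWpos]
    refine ⟨∅, ∅, by simp, by simp, by simp, Or.inl (by simp), ?_⟩
    simp [hW0]

lemma expand_side (c : ℝ) (T T1 T2 : FTG α) {r s : ℕ}
    (A : Fin r → Finset α) (B : Fin s → Finset α) (b : Fin s → α)
    (hBne : ∀ i, (B i).Nonempty)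
    (hBd : ∀ i i', i ≠ i' → Disjoint (B i) (B i'))
    (hbinj : Function.Injective b)
    (hbA : ∀ i j, b i ∉ A j)
    (hd12 : Disjoint T1.verts T2.verts)
    (hT1v : T1.verts = Finset.univ.biUnion A ∪ Finset.univ.image b)
    (hT2B : Finset.univ.biUnion B ⊆ T2.verts)
    (hbb : ∀ i i', i ≠ i' → T1.theta (b i) (b i') = 0)
    (horb : ∀ i j, (∀ u ∈ A j, T1.theta (b i) u = 1) ∨ (∀ u ∈ A j, T1.theta (b i) u = -1))
    (hTv : T.verts = Finset.univ.biUnion A ∪ Finset.univ.biUnion B)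
    (hTA : ∀ u ∈ Finset.univ.biUnion A, ∀ v ∈ Finset.univ.biUnion A,
      T.theta u v = T1.theta u v)
    (hcross : ∀ j i, ∀ u ∈ A j, ∀ v ∈ B i,
      ((∀ x ∈ A j, T1.theta (b i) x = 1) → T.theta u v = 1) ∧
      ((∀ x ∈ A j, T1.theta (b i) x = -1) → T.theta u v = -1))
    (ih1 : ∀ w : α → ℕ,
      (∀ v ∈ T1.verts, (w v : ℝ) ≤ c * ∑ x ∈ T1.verts, (w x : ℝ)) → Concl c T1 w)
    (w : α → ℕ)
    (hbal : ∀ v ∈ T.verts, (w v : ℝ) ≤ c * ∑ x ∈ T.verts, (w x : ℝ))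
    (hBsm : ∀ i, (∑ x ∈ B i, (w x : ℝ)) ≤ c * ∑ x ∈ T.verts, (w x : ℝ)) :
    Concl c T w := by
  classical
  set SA := Finset.univ.biUnion A with hSA
  set SB := Finset.univ.biUnion B with hSB
  set imb := Finset.univ.image b with himb
  have hSAsub : SA ⊆ T1.verts := by rw [hT1v]; exact Finset.subset_union_left
  have hSAT : SA ⊆ T.verts := by rw [hTv]; exact Finset.subset_union_left
  have hSBT : SB ⊆ T.verts := by rw [hTv]; exact Finset.subset_union_right
  have hSASB : Disjoint SA SB := hd12.mono hSAsub hT2B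
  have hSAimb : Disjoint SA imb := by
    rw [Finset.disjoint_right]
    intro x hx hxA
    obtain ⟨i, _, rfl⟩ := Finset.mem_image.mp hx
    obtain ⟨j, _, hj⟩ := Finset.mem_biUnion.mp hxA
    exact hbA i j hj
  set w1 : α → ℕ := fun x =>
    if x ∈ imb then ∑ i ∈ Finset.univ.filter (fun i => b i = x), ∑ y ∈ B i, w y
    else w x with hw1
  have hw1b : ∀ i, w1 (b i) = ∑ y ∈ B i, w y := by
    intro i
    have hmem : b i ∈ imb := Finset.mem_image.mpr ⟨i, Finset.mem_univ i, rfl⟩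
    have hfil : Finset.univ.filter (fun i' => b i' = b i) = {i} := by
      ext i'
      simp [hbinj.eq_iff]
    show (if b i ∈ imb then ∑ i' ∈ Finset.univ.filter (fun i' => b i' = b i),
        ∑ y ∈ B i', w y else w (b i)) = ∑ y ∈ B i, w y
    rw [if_pos hmem, hfil, Finset.sum_singleton]
  have hw1A : ∀ x ∉ imb, w1 x = w x := by
    intro x hx
    show (if x ∈ imb then _ else w x) = w x
    rw [if_neg hx]
  have hsum1 : ∑ x ∈ T1.verts, w1 x = ∑ x ∈ T.verts, w x := by
    rw [hT1v, hTv, Finset.sum_union hSAimb, Finset.sum_union hSASB]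
    congr 1
    · exact Finset.sum_congr rfl
        (fun x hx => hw1A x (Finset.disjoint_left.mp hSAimb hx))
    · have hbi : ∑ x ∈ SB, w x = ∑ i : Fin s, ∑ y ∈ B i, w y :=
        Finset.sum_biUnion (fun i _ i' _ hne => hBd i i' hne)
      rw [himb, Finset.sum_image (fun i _ i' _ h => hbinj h), hbi]
      exact Finset.sum_congr rfl (fun i _ => hw1b i)
  have hsum1R : ∑ x ∈ T1.verts, (w1 x : ℝ) = ∑ x ∈ T.verts, (w x : ℝ) := by
    rw [← Nat.cast_sum, ← Nat.cast_sum, hsum1]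
  have hbal1 : ∀ v ∈ T1.verts, (w1 v : ℝ) ≤ c * ∑ x ∈ T1.verts, (w1 x : ℝ) := by
    intro v hv
    rw [hsum1R]
    rw [hT1v] at hv
    rcases Finset.mem_union.mp hv with hvA | hvb
    · rw [hw1A v (Finset.disjoint_left.mp hSAimb hvA)]
      exact hbal v (hSAT hvA)
    · obtain ⟨i, _, rfl⟩ := Finset.mem_image.mp hvb
      rw [hw1b i]
      calc ((∑ y ∈ B i, w y : ℕ) : ℝ) = ∑ y ∈ B i, (w y : ℝ) := by push_cast; rfl
        _ ≤ _ := hBsm i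
  obtain ⟨U1, U2, hU1, hU2, hU12, hstrong, hmin⟩ := ih1 w1 hbal1
  set E : Finset α → Finset α := fun U =>
    (U \ imb) ∪ (Finset.univ.filter (fun i => b i ∈ U)).biUnion B with hE
  have hsdA : ∀ (U : Finset α), U ⊆ T1.verts → ∀ x ∈ U \ imb, x ∈ SA := by
    intro U hU x hx
    have hx1 := Finset.mem_sdiff.mp hx
    have := hU hx1.1
    rw [hT1v] at this
    rcases Finset.mem_union.mp this with h | h
    · exact h
    · exact absurd h hx1.2
  have hbiSB : ∀ (U : Finset α),
      (Finset.univ.filter (fun i => b i ∈ U)).biUnion B ⊆ SB := by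
    intro U x hx
    obtain ⟨i, _, hxB⟩ := Finset.mem_biUnion.mp hx
    exact Finset.mem_biUnion.mpr ⟨i, Finset.mem_univ i, hxB⟩
  have hEsub : ∀ (U : Finset α), U ⊆ T1.verts → E U ⊆ T.verts := by
    intro U hU x hx
    rcases Finset.mem_union.mp hx with hx | hx
    · exact hSAT (hsdA U hU x hx)
    · exact hSBT (hbiSB U hx)
  have hEw : ∀ (U : Finset α), U ⊆ T1.verts → ∑ x ∈ E U, w x = ∑ x ∈ U, w1 x := by
    intro U hU
    have hdisjE : Disjoint (U \ imb) ((Finset.univ.filter (fun i => b i ∈ U)).biUnion B) :=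
      hSASB.mono (fun x hx => hsdA U hU x hx) (hbiSB U)
    rw [hE]
    show ∑ x ∈ (U \ imb) ∪ (Finset.univ.filter (fun i => b i ∈ U)).biUnion B, w x
        = ∑ x ∈ U, w1 x
    rw [Finset.sum_union hdisjE]
    have h1 : ∑ x ∈ U \ imb, w x = ∑ x ∈ U \ imb, w1 x :=
      Finset.sum_congr rfl (fun x hx => (hw1A x (Finset.mem_sdiff.mp hx).2).symm)
    have h2 : ∑ x ∈ (Finset.univ.filter (fun i => b i ∈ U)).biUnion B, w x
        = ∑ x ∈ U ∩ imb, w1 x := by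
      have hbi : ∑ x ∈ (Finset.univ.filter (fun i => b i ∈ U)).biUnion B, w x
          = ∑ i ∈ Finset.univ.filter (fun i => b i ∈ U), ∑ y ∈ B i, w y :=
        Finset.sum_biUnion (fun i _ i' _ hne => hBd i i' hne)
      have himg : U ∩ imb = (Finset.univ.filter (fun i => b i ∈ U)).image b := by
        ext x
        simp only [Finset.mem_inter, himb, Finset.mem_image, Finset.mem_filter,
          Finset.mem_univ, true_and]
        constructor
        · rintro ⟨hxU, i, rfl⟩
          exact ⟨i, hxU, rfl⟩
        · rintro ⟨i, hiU, rfl⟩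
          exact ⟨hiU, i, rfl⟩
      rw [hbi, himg, Finset.sum_image (fun i _ i' _ h => hbinj h)]
      exact Finset.sum_congr rfl (fun i _ => (hw1b i).symm)
    rw [h1, h2, add_comm]
    exact Finset.sum_inter_add_sum_sdiff U imb w1
  have hEd : Disjoint (E U1) (E U2) := by
    rw [Finset.disjoint_left]
    intro x hx1 hx2
    rcases Finset.mem_union.mp hx1 with h1 | h1 <;> rcases Finset.mem_union.mp hx2 with h2 | h2
    · exact Finset.disjoint_left.mp hU12 (Finset.mem_sdiff.mp h1).1 (Finset.mem_sdiff.mp h2).1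
    · exact Finset.disjoint_left.mp hSASB (hsdA U1 hU1 x h1) (hbiSB U2 h2)
    · exact Finset.disjoint_left.mp hSASB (hsdA U2 hU2 x h2) (hbiSB U1 h1)
    · obtain ⟨i, hi, hxB⟩ := Finset.mem_biUnion.mp h1
      obtain ⟨i', hi', hxB'⟩ := Finset.mem_biUnion.mp h2
      have hbU1 : b i ∈ U1 := (Finset.mem_filter.mp hi).2
      have hbU2 : b i' ∈ U2 := (Finset.mem_filter.mp hi').2
      by_cases hii : i = i'
      · subst hii
        exact Finset.disjoint_left.mp hU12 hbU1 hbU2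
      · exact Finset.disjoint_left.mp (hBd i i' hii) hxB hxB'
  have hadj : ∀ u ∈ E U1, ∀ v ∈ E U2,
      (∀ x ∈ U1, ∀ y ∈ U2, T1.StrongAdj x y) → T.theta u v = 1 := by
    intro u hu v hv hall
    rcases Finset.mem_union.mp hu with h1 | h1 <;> rcases Finset.mem_union.mp hv with h2 | h2
    · rw [hTA u (hsdA U1 hU1 u h1) v (hsdA U2 hU2 v h2)]
      exact (hall u (Finset.mem_sdiff.mp h1).1 v (Finset.mem_sdiff.mp h2).1).2.2.2
    · obtain ⟨i, hi, hvB⟩ := Finset.mem_biUnion.mp h2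
      have hbiU2 : b i ∈ U2 := (Finset.mem_filter.mp hi).2
      obtain ⟨j, _, huAj⟩ := Finset.mem_biUnion.mp (hsdA U1 hU1 u h1)
      have hsa := hall u (Finset.mem_sdiff.mp h1).1 (b i) hbiU2
      have hθ : T1.theta (b i) u = 1 := by rw [T1.symm]; exact hsa.2.2.2
      have hb1 : ∀ x ∈ A j, T1.theta (b i) x = 1 := by
        rcases horb i j with h | h
        · exact h
        · have := h u huAj
          rw [hθ] at this
          exact absurd this (by decide)
      exact (hcross j i u huAj v hvB).1 hb1
    · obtain ⟨i, hi, huB⟩ := Finset.mem_biUnion.mp h1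
      have hbiU1 : b i ∈ U1 := (Finset.mem_filter.mp hi).2
      obtain ⟨j, _, hvAj⟩ := Finset.mem_biUnion.mp (hsdA U2 hU2 v h2)
      have hsa := hall (b i) hbiU1 v (Finset.mem_sdiff.mp h2).1
      have hθ : T1.theta (b i) v = 1 := hsa.2.2.2
      have hb1 : ∀ x ∈ A j, T1.theta (b i) x = 1 := by
        rcases horb i j with h | h
        · exact h
        · have := h v hvAj
          rw [hθ] at this
          exact absurd this (by decide)
      rw [T.symm]
      exact (hcross j i v hvAj u huB).1 hb1
    · obtain ⟨i, hi, huB⟩ := Finset.mem_biUnion.mp h1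
      obtain ⟨i', hi', hvB⟩ := Finset.mem_biUnion.mp h2
      have hbU1 : b i ∈ U1 := (Finset.mem_filter.mp hi).2
      have hbU2 : b i' ∈ U2 := (Finset.mem_filter.mp hi').2
      have hii : i ≠ i' := by
        rintro rfl
        exact Finset.disjoint_left.mp hU12 hbU1 hbU2
      have := (hall (b i) hbU1 (b i') hbU2).2.2.2
      rw [hbb i i' hii] at this
      exact absurd this (by decide)
  have hanti : ∀ u ∈ E U1, ∀ v ∈ E U2,
      (∀ x ∈ U1, ∀ y ∈ U2, T1.StrongAntiAdj x y) → T.theta u v = -1 := by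
    intro u hu v hv hall
    rcases Finset.mem_union.mp hu with h1 | h1 <;> rcases Finset.mem_union.mp hv with h2 | h2
    · rw [hTA u (hsdA U1 hU1 u h1) v (hsdA U2 hU2 v h2)]
      exact (hall u (Finset.mem_sdiff.mp h1).1 v (Finset.mem_sdiff.mp h2).1).2.2.2
    · obtain ⟨i, hi, hvB⟩ := Finset.mem_biUnion.mp h2
      have hbiU2 : b i ∈ U2 := (Finset.mem_filter.mp hi).2
      obtain ⟨j, _, huAj⟩ := Finset.mem_biUnion.mp (hsdA U1 hU1 u h1)
      have hsa := hall u (Finset.mem_sdiff.mp h1).1 (b i) hbiU2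
      have hθ : T1.theta (b i) u = -1 := by rw [T1.symm]; exact hsa.2.2.2
      have hb1 : ∀ x ∈ A j, T1.theta (b i) x = -1 := by
        rcases horb i j with h | h
        · have := h u huAj
          rw [hθ] at this
          exact absurd this (by decide)
        · exact h
      exact (hcross j i u huAj v hvB).2 hb1
    · obtain ⟨i, hi, huB⟩ := Finset.mem_biUnion.mp h1
      have hbiU1 : b i ∈ U1 := (Finset.mem_filter.mp hi).2
      obtain ⟨j, _, hvAj⟩ := Finset.mem_biUnion.mp (hsdA U2 hU2 v h2)
      have hsa := hall (b i) hbiU1 v (Finset.mem_sdiff.mp h2).1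
      have hθ : T1.theta (b i) v = -1 := hsa.2.2.2
      have hb1 : ∀ x ∈ A j, T1.theta (b i) x = -1 := by
        rcases horb i j with h | h
        · have := h v hvAj
          rw [hθ] at this
          exact absurd this (by decide)
        · exact h
      rw [T.symm]
      exact (hcross j i v hvAj u huB).2 hb1
    · obtain ⟨i, hi, huB⟩ := Finset.mem_biUnion.mp h1
      obtain ⟨i', hi', hvB⟩ := Finset.mem_biUnion.mp h2
      have hbU1 : b i ∈ U1 := (Finset.mem_filter.mp hi).2
      have hbU2 : b i' ∈ U2 := (Finset.mem_filter.mp hi').2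
      have hii : i ≠ i' := by
        rintro rfl
        exact Finset.disjoint_left.mp hU12 hbU1 hbU2
      have := (hall (b i) hbU1 (b i') hbU2).2.2.2
      rw [hbb i i' hii] at this
      exact absurd this (by decide)
  refine ⟨E U1, E U2, hEsub U1 hU1, hEsub U2 hU2, hEd, ?_, ?_⟩
  · rcases hstrong with h | h
    · left
      intro u hu v hv
      refine ⟨hEsub U1 hU1 hu, hEsub U2 hU2 hv, ?_, hadj u hu v hv h⟩
      intro he
      exact Finset.disjoint_left.mp hEd hu (by rw [he]; exact hv)
    · right
      intro u hu v hv
      refine ⟨hEsub U1 hU1 hu, hEsub U2 hU2 hv, ?_, hanti u hu v hv h⟩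
      intro he
      exact Finset.disjoint_left.mp hEd hu (by rw [he]; exact hv)
  · have e1 : ∑ x ∈ E U1, (w x : ℝ) = ∑ x ∈ U1, (w1 x : ℝ) := by
      rw [← Nat.cast_sum, ← Nat.cast_sum, hEw U1 hU1]
    have e2 : ∑ x ∈ E U2, (w x : ℝ) = ∑ x ∈ U2, (w1 x : ℝ) := by
      rw [← Nat.cast_sum, ← Nat.cast_sum, hEw U2 hU2]
    rw [e1, e2, ← hsum1R]
    exact hmin

lemma join_case (k : ℕ) (c : ℝ) (T T1 T2 : FTG α)
    (hj : ∃ (r s : ℕ) (A : Fin r → Finset α) (B : Fin s → Finset α)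
      (a : Fin r → α) (b : Fin s → α),
      1 ≤ r ∧ r ≤ k ∧ 1 ≤ s ∧ s ≤ k ∧
      (∀ j, (A j).Nonempty) ∧ (∀ i, (B i).Nonempty) ∧
      (∀ j j', j ≠ j' → Disjoint (A j) (A j')) ∧
      (∀ i i', i ≠ i' → Disjoint (B i) (B i')) ∧
      Function.Injective a ∧ Function.Injective b ∧
      (∀ i j, b i ∉ A j) ∧ (∀ j i, a j ∉ B i) ∧
      Disjoint T1.verts T2.verts ∧
      T1.verts = Finset.univ.biUnion A ∪ Finset.univ.image b ∧
      T2.verts = Finset.univ.biUnion B ∪ Finset.univ.image a ∧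
      (∀ i i', i ≠ i' → T1.theta (b i) (b i') = 0) ∧
      (∀ j j', j ≠ j' → T2.theta (a j) (a j') = 0) ∧
      (∀ i j, ((∀ u ∈ A j, T1.theta (b i) u = 1) ∧ (∀ u ∈ B i, T2.theta (a j) u = 1)) ∨
              ((∀ u ∈ A j, T1.theta (b i) u = -1) ∧ (∀ u ∈ B i, T2.theta (a j) u = -1))) ∧
      T.verts = Finset.univ.biUnion A ∪ Finset.univ.biUnion B ∧
      (∀ u ∈ Finset.univ.biUnion A, ∀ v ∈ Finset.univ.biUnion A,
        T.theta u v = T1.theta u v) ∧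
      (∀ u ∈ Finset.univ.biUnion B, ∀ v ∈ Finset.univ.biUnion B,
        T.theta u v = T2.theta u v) ∧
      (∀ j i, ∀ u ∈ A j, ∀ v ∈ B i,
        ((∀ x ∈ A j, T1.theta (b i) x = 1) → T.theta u v = 1) ∧
        ((∀ x ∈ A j, T1.theta (b i) x = -1) → T.theta u v = -1)))
    (ih1 : ∀ w : α → ℕ,
      (∀ v ∈ T1.verts, (w v : ℝ) ≤ c * ∑ x ∈ T1.verts, (w x : ℝ)) → Concl c T1 w)
    (ih2 : ∀ w : α → ℕ,
      (∀ v ∈ T2.verts, (w v : ℝ) ≤ c * ∑ x ∈ T2.verts, (w x : ℝ)) → Concl c T2 w)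
    (w : α → ℕ)
    (hbal : ∀ v ∈ T.verts, (w v : ℝ) ≤ c * ∑ x ∈ T.verts, (w x : ℝ)) :
    Concl c T w := by
  obtain ⟨r, s, A, B, a, b, hr1, hrk, hs1, hsk, hAne, hBne, hAd, hBd, hainj, hbinj,
    hbA, haB, hd12, hT1v, hT2v, hbb0, haa0, hor, hTv, hTA, hTB, hcross⟩ := hj
  by_cases hBsm : ∀ i, (∑ x ∈ B i, (w x : ℝ)) ≤ c * ∑ x ∈ T.verts, (w x : ℝ)
  · exact expand_side c T T1 T2 A B b hBne hBd hbinj hbA hd12 hT1v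
      (by rw [hT2v]; exact Finset.subset_union_left) hbb0
      (fun i j => (hor i j).imp And.left And.left) hTv hTA hcross ih1 w hbal hBsm
  · by_cases hAsm : ∀ j, (∑ x ∈ A j, (w x : ℝ)) ≤ c * ∑ x ∈ T.verts, (w x : ℝ)
    · have horb' : ∀ j i, (∀ u ∈ B i, T2.theta (a j) u = 1) ∨
          (∀ u ∈ B i, T2.theta (a j) u = -1) :=
        fun j i => (hor i j).imp And.right And.right
      have hcross' : ∀ i j, ∀ u ∈ B i, ∀ v ∈ A j,
          ((∀ x ∈ B i, T2.theta (a j) x = 1) → T.theta u v = 1) ∧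
          ((∀ x ∈ B i, T2.theta (a j) x = -1) → T.theta u v = -1) := by
        intro i j u hu v hv
        constructor
        · intro hall
          have hb1 : ∀ x ∈ A j, T1.theta (b i) x = 1 := by
            rcases hor i j with h | h
            · exact h.1
            · have := h.2 u hu
              rw [hall u hu] at this
              exact absurd this (by decide)
          rw [T.symm]
          exact (hcross j i v hv u hu).1 hb1
        · intro hall
          have hb1 : ∀ x ∈ A j, T1.theta (b i) x = -1 := by
            rcases hor i j with h | h
            · have := h.2 u hu
              rw [hall u hu] at this
              exact absurd this (by decide)
            · exact h.1
          rw [T.symm]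
          exact (hcross j i v hv u hu).2 hb1
      exact expand_side c T T2 T1 B A a hAne hAd hainj haB hd12.symm hT2v
        (by rw [hT1v]; exact Finset.subset_union_left) haa0 horb'
        (by rw [hTv, Finset.union_comm]) hTB hcross' ih2 w hbal hAsm
    · push_neg at hBsm hAsm
      obtain ⟨i0, hi0⟩ := hBsm
      obtain ⟨j0, hj0⟩ := hAsm
      have hAsub : A j0 ⊆ T.verts := by
        rw [hTv]
        exact fun x hx => Finset.mem_union_left _
          (Finset.mem_biUnion.mpr ⟨j0, Finset.mem_univ j0, hx⟩)
      have hBsub : B i0 ⊆ T.verts := by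
        rw [hTv]
        exact fun x hx => Finset.mem_union_right _
          (Finset.mem_biUnion.mpr ⟨i0, Finset.mem_univ i0, hx⟩)
      have hA1 : A j0 ⊆ T1.verts := by
        rw [hT1v]
        exact fun x hx => Finset.mem_union_left _
          (Finset.mem_biUnion.mpr ⟨j0, Finset.mem_univ j0, hx⟩)
      have hB2 : B i0 ⊆ T2.verts := by
        rw [hT2v]
        exact fun x hx => Finset.mem_union_left _
          (Finset.mem_biUnion.mpr ⟨i0, Finset.mem_univ i0, hx⟩)
      have hABd : Disjoint (A j0) (B i0) := hd12.mono hA1 hB2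
      refine ⟨A j0, B i0, hAsub, hBsub, hABd, ?_, le_min hj0.le hi0.le⟩
      rcases hor i0 j0 with h | h
      · left
        intro u hu v hv
        exact ⟨hAsub hu, hBsub hv, fun he => Finset.disjoint_left.mp hABd hu
          (by rw [he]; exact hv), (hcross j0 i0 u hu v hv).1 h.1⟩
      · right
        intro u hu v hv
        exact ⟨hAsub hu, hBsub hv, fun he => Finset.disjoint_left.mp hABd hu
          (by rw [he]; exact hv), (hcross j0 i0 u hu v hv).2 h.1⟩

lemma key (k : ℕ) (hk : 1 ≤ k) (c : ℝ) (hc : 0 < c) (hck : c * k < 1/2)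
    (C : Set (FTG α)) (hered : FTG.ClosedUnderInduced C) (hgood : FTG.IsGood (c*k) C)
    (T : FTG α) (hT : FTG.InClosure C k T) :
    ∀ w : α → ℕ, (∀ v ∈ T.verts, (w v : ℝ) ≤ c * ∑ x ∈ T.verts, (w x : ℝ)) →
      Concl c T w := by
  induction hT with
  | base T h => exact fun w hbal => base_case k hk c hc hck C hered hgood T h w hbal
  | join T T1 T2 h1 h2 hj ih1 ih2 =>
      exact fun w hbal => join_case k c T T1 T2 hj ih1 ih2 w hbal

end FTG19aux

/-- if 𝒞 is a ck-good hereditary class of graphs (k ≥ 1, 0 < c, ck < 1/2),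
then every trigraph T0 of the closure of 𝒞^{≤k} under generalized k-joins containing a
strongly adjacent or strongly antiadjacent pair has a biclique or a complement biclique of
size at least c·|V(T0)|. -/
theorem stmt_19 {α : Type} [DecidableEq α] (k : ℕ) (hk : 1 ≤ k) (c : ℝ) (hc : 0 < c)
    (hck : c * k < 1 / 2) (C : Set (FTG α)) (hgraph : ∀ G ∈ C, FTG.IsGraph G)
    (hered : FTG.ClosedUnderInduced C) (hgood : FTG.IsGood (c * k) C)
    (T0 : FTG α) (hT0 : FTG.InClosure C k T0)
    (hedge : ∃ u v, T0.StrongAdj u v ∨ T0.StrongAntiAdj u v) :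
    ∃ V1 V2 : Finset α, V1 ⊆ T0.verts ∧ V2 ⊆ T0.verts ∧ Disjoint V1 V2 ∧
      ((∀ u ∈ V1, ∀ v ∈ V2, T0.StrongAdj u v) ∨
       (∀ u ∈ V1, ∀ v ∈ V2, T0.StrongAntiAdj u v)) ∧
      c * (T0.verts.card : ℝ) ≤ (min V1.card V2.card : ℕ) := by
  obtain ⟨u, v, huv⟩ := hedge
  by_cases hb : (1:ℝ) ≤ c * T0.verts.card
  · obtain ⟨V1, V2, h1, h2, hd, hs, hm⟩ :=
      FTG19aux.key k hk c hc hck C hered hgood T0 hT0 (fun _ => 1)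
        (by intro x hx; simpa using hb)
    refine ⟨V1, V2, h1, h2, hd, hs, ?_⟩
    have hm' : c * (T0.verts.card : ℝ) ≤ min (V1.card : ℝ) (V2.card : ℝ) := by
      simpa using hm
    rw [Nat.cast_min]
    exact hm'
  · push_neg at hb
    rcases huv with h | h
    · obtain ⟨hu, hv, hne, hθ⟩ := h
      refine ⟨{u}, {v}, by simpa using hu, by simpa using hv, by simp [hne, Ne.symm hne], Or.inl ?_, ?_⟩
      · intro x hx y hy
        rw [Finset.mem_singleton] at hx hy
        subst hx; subst hy
        exact ⟨hu, hv, hne, hθ⟩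
      · simp only [Finset.card_singleton, min_self, Nat.cast_one]
        exact hb.le
    · obtain ⟨hu, hv, hne, hθ⟩ := h
      refine ⟨{u}, {v}, by simpa using hu, by simpa using hv, by simp [hne, Ne.symm hne], Or.inr ?_, ?_⟩
      · intro x hx y hy
        rw [Finset.mem_singleton] at hx hy
        subst hx; subst hy
        exact ⟨hu, hv, hne, hθ⟩
      · simp only [Finset.card_singleton, min_self, Nat.cast_one]
        exact hb.le
end
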